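/- (Theorem 2, first part) Let γ(p,q) = |det Δ_{p,q}| be the number of spanning trees of the rectangular grid graph with non-sink vertices Γ(p,q). Then for every quadruple of positive integers m, n, p, q, the number γ(p,q) divides γ(mp,nq). -/

import Mathlib

open scoped BigOperators

/-- The lattice points of the open rectangle `(0,p) × (0,q)`, as a finset of `ℤ²`. -/
noncomputable def rectPts (p q : ℕ) : Finset (ℤ × ℤ) :=
  Finset.Ioo (0 : ℤ) (p : ℤ) ×ˢ Finset.Ioo (0 : ℤ) (q : ℤ)

open Classical in
/-- The reduced Laplacian `Δ_{p,q}` of the rectangle: `4` on the diagonal, `-1`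
between lattice neighbors (points at Euclidean distance `1`), `0` otherwise. -/
noncomputable def rectLap (p q : ℕ) : Matrix (rectPts p q) (rectPts p q) ℤ :=
  fun v w => if v = w then 4
    else if ((v : ℤ × ℤ).1 - (w : ℤ × ℤ).1) ^ 2 +
            ((v : ℤ × ℤ).2 - (w : ℤ × ℤ).2) ^ 2 = 1 then -1 else 0

/-- `γ(p,q) = |det Δ_{p,q}|`, the order of the sandpile group `G(p,q)`, equal to
the number of spanning trees of the rectangular grid graph. -/
noncomputable def gammaRect (p q : ℕ) : ℤ := |(rectLap p q).det|

open Matrix Polynomial Real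
open scoped Kronecker

/-! ### The path matrix and its explicit diagonalization -/

/-- The path matrix: `2` on the diagonal, `-1` on the off-diagonals. -/
def pathM (n : ℕ) : Matrix (Fin n) (Fin n) ℤ :=
  Matrix.of fun i j => if i = j then 2
    else if (i : ℕ) = (j : ℕ) + 1 ∨ (j : ℕ) = (i : ℕ) + 1 then -1 else 0

noncomputable def pathMR (n : ℕ) : Matrix (Fin n) (Fin n) ℝ :=
  (pathM n).map (Int.cast)

lemma pathMR_apply (n : ℕ) (i j : Fin n) :
    pathMR n i j = (if i = j then (2:ℝ) else 0) +
      ((if (i : ℕ) = (j : ℕ) + 1 then (-1:ℝ) else 0) +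
       (if (j : ℕ) = (i : ℕ) + 1 then (-1:ℝ) else 0)) := by
  simp only [pathMR, pathM, Matrix.map_apply, Matrix.of_apply]
  have : i = j ↔ (i:ℕ) = (j:ℕ) := ⟨fun h => by rw [h], fun h => Fin.ext h⟩
  split_ifs <;> (try norm_num) <;> omega

lemma sum_ite_coe (n c : ℕ) (v : Fin n → ℝ) :
    ∑ i : Fin n, (if (i : ℕ) = c then v i else 0) =
      if h : c < n then v ⟨c, h⟩ else 0 := by
  split_ifs with h
  · rw [Finset.sum_eq_single (⟨c, h⟩ : Fin n)]
    · simp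
    · intro b _ hb
      simp only [ite_eq_right_iff]
      intro hbc; exact absurd (Fin.ext hbc) hb
    · simp
  · apply Finset.sum_eq_zero
    intro i _
    have := i.isLt
    simp only [ite_eq_right_iff]
    intro hic; omega

/-- Key trig eigenvector computation for the path matrix. -/
lemma pathMR_row_sum (p : ℕ) (hp : 0 < p) (θ : ℝ) (hθ : Real.sin (p * θ) = 0)
    (j : Fin (p - 1)) :
    ∑ i : Fin (p - 1), pathMR (p - 1) j i * Real.sin (((i : ℕ) + 1) * θ) =
      (2 - 2 * Real.cos θ) * Real.sin (((j : ℕ) + 1) * θ) := by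
  have hjlt := j.isLt
  have hsplit : ∑ i : Fin (p - 1), pathMR (p - 1) j i * Real.sin (((i : ℕ) + 1) * θ)
      = (∑ i : Fin (p-1), (if i = j then (2:ℝ) * Real.sin (((i : ℕ) + 1) * θ) else 0))
      + ((∑ i : Fin (p-1), (if (i:ℕ) = (j:ℕ) + 1 then (-1:ℝ) * Real.sin (((i : ℕ) + 1) * θ) else 0))
      + (∑ i : Fin (p-1), (if (j:ℕ) = (i:ℕ) + 1 then (-1:ℝ) * Real.sin (((i : ℕ) + 1) * θ) else 0))) := by
    rw [← Finset.sum_add_distrib]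
    rw [← Finset.sum_add_distrib]
    apply Finset.sum_congr rfl
    intro i _
    rw [pathMR_apply]
    split_ifs with a b c <;> (try ring) <;>
      (exfalso; (try subst a) <;> omega)
  rw [hsplit]
  have h1 : (∑ i : Fin (p-1), (if i = j then (2:ℝ) * Real.sin (((i : ℕ) + 1) * θ) else 0))
      = 2 * Real.sin (((j : ℕ) + 1) * θ) := by
    rw [Finset.sum_ite_eq' Finset.univ j]
    simp
  have h2 : (∑ i : Fin (p-1), (if (i:ℕ) = (j:ℕ) + 1 then (-1:ℝ) * Real.sin (((i : ℕ) + 1) * θ) else 0))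
      = - Real.sin (((j:ℕ) + 2) * θ) := by
    have := sum_ite_coe (p-1) ((j:ℕ)+1) (fun i => (-1:ℝ) * Real.sin (((i : ℕ) + 1) * θ))
    rw [this]
    split_ifs with h
    · norm_num; ring_nf
    · have hj : (j:ℕ) + 2 = p := by omega
      rw [show (((j:ℕ):ℝ) + 2) = (p:ℝ) by exact_mod_cast congrArg (Nat.cast : ℕ → ℝ) hj]
      rw [hθ]; ring
  have h3 : (∑ i : Fin (p-1), (if (j:ℕ) = (i:ℕ) + 1 then (-1:ℝ) * Real.sin (((i : ℕ) + 1) * θ) else 0))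
      = - Real.sin ((j:ℕ) * θ) := by
    rcases Nat.eq_zero_or_pos (j:ℕ) with hj0 | hj0
    · rw [Finset.sum_eq_zero, hj0]
      · simp
      · intro i _
        simp only [ite_eq_right_iff]; intro h; omega
    · have : ∀ i : Fin (p-1), ((j:ℕ) = (i:ℕ) + 1) ↔ ((i:ℕ) = (j:ℕ) - 1) := by
        intro i; omega
      rw [Finset.sum_congr rfl (fun i _ => by rw [if_congr (this i) rfl rfl])]
      rw [sum_ite_coe (p-1) ((j:ℕ)-1) (fun i => (-1:ℝ) * Real.sin (((i : ℕ) + 1) * θ))]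
      have hlt : (j:ℕ) - 1 < p - 1 := by omega
      rw [dif_pos hlt]
      have : (((j:ℕ) - 1 : ℕ) : ℝ) + 1 = (j:ℕ) := by
        have : ((j:ℕ) - 1 : ℕ) + 1 = (j:ℕ) := by omega
        exact_mod_cast congrArg (Nat.cast : ℕ → ℝ) this
      rw [this]; ring
  rw [h1, h2, h3]
  have expand1 : Real.sin (((j:ℕ) + 2) * θ) = Real.sin ((((j:ℕ)+1) * θ) + θ) := by ring_nf
  have expand2 : Real.sin ((j:ℕ) * θ) = Real.sin ((((j:ℕ)+1) * θ) - θ) := by ring_nf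
  rw [expand1, expand2, Real.sin_add, Real.sin_sub]
  ring

/-- eigenvalues -/
noncomputable def pathα (p : ℕ) (k : Fin (p - 1)) : ℝ :=
  2 - 2 * Real.cos (((k : ℕ) + 1) * Real.pi / p)

/-- eigenvector matrix (columns are eigenvectors) -/
noncomputable def pathS (p : ℕ) : Matrix (Fin (p - 1)) (Fin (p - 1)) ℝ :=
  Matrix.of fun i k => Real.sin (((i : ℕ) + 1) * ((((k : ℕ) + 1) : ℝ) * Real.pi / p))

lemma theta_mem (p : ℕ) (hp : 0 < p) (k : Fin (p - 1)) :
    0 < (((k : ℕ) + 1) : ℝ) * Real.pi / p ∧ (((k : ℕ) + 1) : ℝ) * Real.pi / p < Real.pi := by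
  have hk := k.isLt
  have hp' : (0:ℝ) < p := by exact_mod_cast hp
  constructor
  · apply div_pos (by positivity) hp'
  · rw [div_lt_iff₀ hp']
    have : (((k:ℕ):ℝ) + 1) < (p:ℝ) := by
      have : (k:ℕ) + 1 < p := by omega
      exact_mod_cast this
    nlinarith [Real.pi_pos]

lemma sin_p_theta (p : ℕ) (hp : 0 < p) (k : Fin (p - 1)) :
    Real.sin (p * ((((k : ℕ) + 1) : ℝ) * Real.pi / p)) = 0 := by
  have hp' : (p:ℝ) ≠ 0 := by positivity
  have : (p:ℝ) * ((((k : ℕ) + 1) : ℝ) * Real.pi / p) = (((k:ℕ) + 1 : ℕ) : ℝ) * Real.pi := by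
    push_cast; field_simp
  rw [this, Real.sin_nat_mul_pi]

lemma pathM_mul_S (p : ℕ) (hp : 0 < p) :
    pathMR (p - 1) * pathS p = pathS p * Matrix.diagonal (pathα p) := by
  ext j k
  rw [Matrix.mul_apply, Matrix.mul_diagonal]
  exact (pathMR_row_sum p hp _ (sin_p_theta p hp k) j).trans
    (by rw [pathS]; unfold pathα; simp only [Matrix.of_apply]; ring)

lemma pathα_pos (p : ℕ) (hp : 0 < p) (k : Fin (p - 1)) : 0 < pathα p k := by
  have h := theta_mem p hp k
  have hcos : Real.cos (((k : ℕ) + 1) * Real.pi / p) < 1 := by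
    have := Real.strictAntiOn_cos (Set.mem_Icc.mpr ⟨le_refl 0, le_of_lt Real.pi_pos⟩)
      (Set.mem_Icc.mpr ⟨le_of_lt h.1, le_of_lt h.2⟩) h.1
    simpa using this
  unfold pathα; linarith

lemma pathα_injective (p : ℕ) (hp : 0 < p) : Function.Injective (pathα p) := by
  intro a b hab
  have ha := theta_mem p hp a
  have hb := theta_mem p hp b
  have : Real.cos (((a : ℕ) + 1) * Real.pi / p) = Real.cos (((b : ℕ) + 1) * Real.pi / p) := by
    unfold pathα at hab; linarith
  have harg := Real.injOn_cos ⟨le_of_lt ha.1, le_of_lt ha.2⟩ ⟨le_of_lt hb.1, le_of_lt hb.2⟩ this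
  have hp' : (0:ℝ) < p := by exact_mod_cast hp
  have : ((a:ℕ):ℝ) = ((b:ℕ):ℝ) := by
    field_simp at harg
    linarith
  exact Fin.ext (by exact_mod_cast this)

lemma pathS_col_mulVec (p : ℕ) (hp : 0 < p) (k : Fin (p - 1)) :
    (pathMR (p - 1)).mulVec (fun i => pathS p i k) = pathα p k • (fun i => pathS p i k) := by
  funext j
  have h2 := congrFun (congrFun (pathM_mul_S p hp) j) k
  rw [Matrix.mul_apply, Matrix.mul_diagonal] at h2
  show (dotProduct (pathMR (p-1) j) fun i => pathS p i k) = _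
  rw [show (dotProduct (pathMR (p-1) j) fun i => pathS p i k)
    = ∑ i, pathMR (p-1) j i * pathS p i k from rfl, h2]
  simp only [Pi.smul_apply, smul_eq_mul]
  ring

lemma pathS_col_ne_zero (p : ℕ) (hp : 0 < p) (k : Fin (p - 1)) :
    (fun i => pathS p i k) ≠ 0 := by
  have hk := k.isLt
  intro hzero
  have hmem := theta_mem p hp k
  have hne : Real.sin ((((k:ℕ)+1):ℝ) * Real.pi / p) ≠ 0 :=
    ne_of_gt (Real.sin_pos_of_pos_of_lt_pi hmem.1 hmem.2)
  apply hne
  simpa [pathS] using congrFun hzero ⟨0, by omega⟩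

lemma pathS_isUnit (p : ℕ) (hp : 0 < p) : IsUnit (pathS p) := by
  rw [← Matrix.linearIndependent_cols_iff_isUnit]
  apply Module.End.eigenvectors_linearIndependent' (Matrix.mulVecLin (pathMR (p-1)))
    (pathα p) (pathα_injective p hp)
  intro k
  constructor
  · rw [Module.End.mem_eigenspace_iff]
    exact pathS_col_mulVec p hp k
  · exact pathS_col_ne_zero p hp k

lemma pathα_isIntegral (p : ℕ) (hp : 0 < p) (k : Fin (p - 1)) :
    IsIntegral ℤ (pathα p k) := by
  refine ⟨(pathM (p - 1)).charpoly, (pathM (p - 1)).charpoly_monic, ?_⟩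
  rw [Polynomial.eval₂_eq_eval_map]
  have hmap : (pathM (p - 1)).charpoly.map (algebraMap ℤ ℝ) = (pathMR (p - 1)).charpoly := by
    rw [← Matrix.charpoly_map]
    rfl
  rw [hmap]
  -- eval of charpoly equals det of (x • 1 - M)
  have heval : Polynomial.eval (pathα p k) (pathMR (p - 1)).charpoly
      = (pathα p k • (1 : Matrix (Fin (p-1)) (Fin (p-1)) ℝ) - pathMR (p - 1)).det := by
    rw [Matrix.charpoly,
      show Polynomial.eval (pathα p k) = ⇑(Polynomial.evalRingHom (pathα p k)) from rfl,
      RingHom.map_det]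
    congr 1
    ext i j
    simp only [RingHom.mapMatrix_apply, Matrix.map_apply, Matrix.charmatrix_apply,
      Matrix.sub_apply, Matrix.smul_apply, Matrix.one_apply, Matrix.diagonal_apply,
      smul_eq_mul]
    split_ifs <;> simp
  rw [heval]
  rw [← Matrix.exists_mulVec_eq_zero_iff]
  refine ⟨fun i => pathS p i k, pathS_col_ne_zero p hp k, ?_⟩
  rw [Matrix.sub_mulVec, Matrix.smul_mulVec, Matrix.one_mulVec, pathS_col_mulVec p hp k,
    sub_self]

/-! ### Determinant of a Kronecker sum -/

section KronSum
variable {m' n' : Type*} [Fintype m'] [Fintype n'] [DecidableEq m'] [DecidableEq n']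

lemma det_kronSum (A : Matrix m' m' ℝ) (B : Matrix n' n' ℝ) (S : Matrix m' m' ℝ)
    (T : Matrix n' n' ℝ) (α : m' → ℝ) (β : n' → ℝ) (hS : IsUnit S) (hT : IsUnit T)
    (hA : A * S = S * Matrix.diagonal α) (hB : B * T = T * Matrix.diagonal β) :
    (A ⊗ₖ (1 : Matrix n' n' ℝ) + (1 : Matrix m' m' ℝ) ⊗ₖ B).det
      = ∏ jk : m' × n', (α jk.1 + β jk.2) := by
  have key : (A ⊗ₖ (1 : Matrix n' n' ℝ) + (1 : Matrix m' m' ℝ) ⊗ₖ B) * (S ⊗ₖ T)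
      = (S ⊗ₖ T) * Matrix.diagonal (fun jk : m' × n' => α jk.1 + β jk.2) := by
    rw [add_mul, ← Matrix.mul_kronecker_mul, ← Matrix.mul_kronecker_mul,
      hA, hB, Matrix.one_mul, Matrix.one_mul]
    have h1 : (S * Matrix.diagonal α) ⊗ₖ T
        = (S ⊗ₖ T) * (Matrix.diagonal α ⊗ₖ (1 : Matrix n' n' ℝ)) := by
      rw [← Matrix.mul_kronecker_mul, Matrix.mul_one]
    have h2 : S ⊗ₖ (T * Matrix.diagonal β)
        = (S ⊗ₖ T) * ((1 : Matrix m' m' ℝ) ⊗ₖ Matrix.diagonal β) := by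
      rw [← Matrix.mul_kronecker_mul, Matrix.mul_one]
    rw [h1, h2, ← Matrix.mul_add]
    congr 1
    rw [← Matrix.diagonal_one, ← Matrix.diagonal_one,
      Matrix.diagonal_kronecker_diagonal, Matrix.diagonal_kronecker_diagonal,
      Matrix.diagonal_add]
    congr 1
    ext jk
    simp
  have hdet := congrArg Matrix.det key
  rw [Matrix.det_mul, Matrix.det_mul, Matrix.det_diagonal] at hdet
  have hSd : S.det ≠ 0 := ((Matrix.isUnit_iff_isUnit_det S).mp hS).ne_zero
  have hTd : T.det ≠ 0 := ((Matrix.isUnit_iff_isUnit_det T).mp hT).ne_zero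
  have hST : (S ⊗ₖ T).det ≠ 0 := by
    rw [Matrix.det_kronecker]
    exact mul_ne_zero (pow_ne_zero _ hSd) (pow_ne_zero _ hTd)
  rw [mul_comm ((S ⊗ₖ T).det)] at hdet
  exact mul_right_cancel₀ hST hdet

end KronSum

/-! ### Reindexing the rectangle Laplacian as a Kronecker sum -/

lemma int_sq_add_sq_eq_one (u v : ℤ) :
    u ^ 2 + v ^ 2 = 1 ↔ (u = 0 ∧ (v = 1 ∨ v = -1)) ∨ ((u = 1 ∨ u = -1) ∧ v = 0) := by
  constructor
  · intro h
    have hu1 : -1 ≤ u := by nlinarith [sq_nonneg v, sq_nonneg (u + 1)]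
    have hu2 : u ≤ 1 := by nlinarith [sq_nonneg v, sq_nonneg (u - 1)]
    have hv1 : -1 ≤ v := by nlinarith [sq_nonneg u, sq_nonneg (v + 1)]
    have hv2 : v ≤ 1 := by nlinarith [sq_nonneg u, sq_nonneg (v - 1)]
    interval_cases u <;> interval_cases v <;> (revert h; norm_num)
  · rintro (⟨rfl, rfl | rfl⟩ | ⟨rfl | rfl, rfl⟩) <;> norm_num

noncomputable def gridEquiv (p q : ℕ) : Fin (p - 1) × Fin (q - 1) ≃ (rectPts p q) := by
  apply Equiv.ofBijective (fun jk =>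
    (⟨(((jk.1 : ℕ) : ℤ) + 1, ((jk.2 : ℕ) : ℤ) + 1), by
      have h1 := jk.1.isLt
      have h2 := jk.2.isLt
      simp only [rectPts, Finset.mem_product, Finset.mem_Ioo]
      omega⟩ : rectPts p q))
  rw [Fintype.bijective_iff_injective_and_card]
  constructor
  · intro a b hab
    simp only [Subtype.mk.injEq, Prod.mk.injEq] at hab
    have : (a.1 : ℕ) = (b.1 : ℕ) ∧ (a.2 : ℕ) = (b.2 : ℕ) := by omega
    exact Prod.ext (Fin.ext this.1) (Fin.ext this.2)
  · rw [Fintype.card_coe]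
    simp only [rectPts, Finset.card_product, Int.card_Ioo, Fintype.card_prod, Fintype.card_fin]
    congr 1 <;> omega

lemma rectLap_submatrix (p q : ℕ) :
    (rectLap p q).submatrix (gridEquiv p q) (gridEquiv p q) =
      pathM (p - 1) ⊗ₖ (1 : Matrix (Fin (q - 1)) (Fin (q - 1)) ℤ)
        + (1 : Matrix (Fin (p - 1)) (Fin (p - 1)) ℤ) ⊗ₖ pathM (q - 1) := by
  ext ⟨j, k⟩ ⟨j', k'⟩
  simp only [Matrix.submatrix_apply, Matrix.add_apply, Matrix.kroneckerMap_apply,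
    Matrix.one_apply, pathM, Matrix.of_apply, rectLap, gridEquiv, Equiv.ofBijective_apply]
  simp only [Subtype.mk.injEq, Prod.mk.injEq, Fin.ext_iff, int_sq_add_sq_eq_one]
  split_ifs <;> omega

/-- The determinant of the rectangle Laplacian as a product of eigenvalues. -/
lemma rectLap_det_real (p q : ℕ) (hp : 0 < p) (hq : 0 < q) :
    (((rectLap p q).det : ℤ) : ℝ)
      = ∏ jk : Fin (p - 1) × Fin (q - 1), (pathα p jk.1 + pathα q jk.2) := by
  have h1 : (rectLap p q).det
      = ((rectLap p q).submatrix (gridEquiv p q) (gridEquiv p q)).det :=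
    (Matrix.det_submatrix_equiv_self _ _).symm
  rw [h1, rectLap_submatrix]
  have hcast : (((pathM (p - 1) ⊗ₖ (1 : Matrix (Fin (q - 1)) (Fin (q - 1)) ℤ)
        + (1 : Matrix (Fin (p - 1)) (Fin (p - 1)) ℤ) ⊗ₖ pathM (q - 1)).det : ℤ) : ℝ)
      = (pathMR (p - 1) ⊗ₖ (1 : Matrix (Fin (q - 1)) (Fin (q - 1)) ℝ)
        + (1 : Matrix (Fin (p - 1)) (Fin (p - 1)) ℝ) ⊗ₖ pathMR (q - 1)).det := by
    rw [show ((Int.cast : ℤ → ℝ) = ⇑(Int.castRingHom ℝ)) from rfl, RingHom.map_det]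
    congr 1
    ext ⟨a, b⟩ ⟨c, d⟩
    simp only [RingHom.mapMatrix_apply, Matrix.map_apply, Matrix.add_apply,
      Matrix.kroneckerMap_apply, Matrix.one_apply, pathMR, pathM, Matrix.of_apply]
    split_ifs <;> norm_num
  rw [hcast]
  exact det_kronSum (pathMR (p-1)) (pathMR (q-1)) (pathS p) (pathS q) (pathα p) (pathα q)
    (pathS_isUnit p hp) (pathS_isUnit q hq) (pathM_mul_S p hp) (pathM_mul_S q hq)

lemma pathα_scale (m p : ℕ) (hm : 0 < m) (hp : 0 < p) (j : Fin (p - 1))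
    (h : m * ((j : ℕ) + 1) - 1 < m * p - 1) :
    pathα (m * p) ⟨m * ((j : ℕ) + 1) - 1, h⟩ = pathα p j := by
  have h1 : 1 ≤ m * ((j : ℕ) + 1) := by
    have := Nat.mul_pos hm (by omega : 0 < (j : ℕ) + 1); omega
  have hm' : (m : ℝ) ≠ 0 := by positivity
  have hp' : (p : ℝ) ≠ 0 := by positivity
  have harg : (((m * ((j : ℕ) + 1) - 1 : ℕ) : ℝ) + 1) * Real.pi / ((m * p : ℕ) : ℝ)
      = (((j : ℕ) : ℝ) + 1) * Real.pi / (p : ℝ) := by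
    rw [Nat.cast_sub h1, Nat.cast_mul, Nat.cast_mul]
    push_cast
    field_simp
    ring
  unfold pathα
  simp only [Fin.val_mk]
  rw [harg]

theorem gammaRect_dvd' (m n p q : ℕ)
    (hm : 0 < m) (hn : 0 < n) (hp : 0 < p) (hq : 0 < q) :
    gammaRect p q ∣ gammaRect (m * p) (n * q) := by
  have hP : 0 < m * p := Nat.mul_pos hm hp
  have hQ : 0 < n * q := Nat.mul_pos hn hq
  set d1 : ℤ := (rectLap p q).det with hd1def
  set d2 : ℤ := (rectLap (m * p) (n * q)).det with hd2def
  -- eigenvalue functions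
  set Λs : Fin (p - 1) × Fin (q - 1) → ℝ := fun jk => pathα p jk.1 + pathα q jk.2 with hΛs
  set Λb : Fin (m * p - 1) × Fin (n * q - 1) → ℝ :=
    fun jk => pathα (m * p) jk.1 + pathα (n * q) jk.2 with hΛb
  have hd1 : ((d1 : ℤ) : ℝ) = ∏ jk, Λs jk := rectLap_det_real p q hp hq
  have hd2 : ((d2 : ℤ) : ℝ) = ∏ jk, Λb jk := rectLap_det_real (m * p) (n * q) hP hQ
  -- the embedding of index sets
  have hι1 : ∀ j : Fin (p - 1), m * ((j : ℕ) + 1) - 1 < m * p - 1 := by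
    intro j
    have hj := j.isLt
    have : ((j : ℕ) + 1) < p := by omega
    have h2 := Nat.mul_lt_mul_of_pos_left this hm
    have h3 : 1 ≤ m * ((j : ℕ) + 1) := by
      have := Nat.mul_pos hm (by omega : 0 < (j : ℕ) + 1); omega
    omega
  have hι2 : ∀ k : Fin (q - 1), n * ((k : ℕ) + 1) - 1 < n * q - 1 := by
    intro k
    have hk := k.isLt
    have : ((k : ℕ) + 1) < q := by omega
    have h2 := Nat.mul_lt_mul_of_pos_left this hn
    have h3 : 1 ≤ n * ((k : ℕ) + 1) := by
      have := Nat.mul_pos hn (by omega : 0 < (k : ℕ) + 1); omega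
    omega
  set g : Fin (p - 1) × Fin (q - 1) → Fin (m * p - 1) × Fin (n * q - 1) :=
    fun jk => (⟨m * ((jk.1 : ℕ) + 1) - 1, hι1 jk.1⟩, ⟨n * ((jk.2 : ℕ) + 1) - 1, hι2 jk.2⟩)
    with hg
  have hginj : Function.Injective g := by
    intro a b hab
    simp only [hg, Prod.mk.injEq, Fin.mk.injEq] at hab
    have h1 : 1 ≤ m * ((a.1 : ℕ) + 1) := by
      have := Nat.mul_pos hm (by omega : 0 < (a.1 : ℕ) + 1); omega
    have h2 : 1 ≤ m * ((b.1 : ℕ) + 1) := by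
      have := Nat.mul_pos hm (by omega : 0 < (b.1 : ℕ) + 1); omega
    have h3 : 1 ≤ n * ((a.2 : ℕ) + 1) := by
      have := Nat.mul_pos hn (by omega : 0 < (a.2 : ℕ) + 1); omega
    have h4 : 1 ≤ n * ((b.2 : ℕ) + 1) := by
      have := Nat.mul_pos hn (by omega : 0 < (b.2 : ℕ) + 1); omega
    have e1 : m * ((a.1 : ℕ) + 1) = m * ((b.1 : ℕ) + 1) := by omega
    have e2 : n * ((a.2 : ℕ) + 1) = n * ((b.2 : ℕ) + 1) := by omega
    have f1 : (a.1 : ℕ) = (b.1 : ℕ) := by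
      have := Nat.eq_of_mul_eq_mul_left hm e1; omega
    have f2 : (a.2 : ℕ) = (b.2 : ℕ) := by
      have := Nat.eq_of_mul_eq_mul_left hn e2; omega
    exact Prod.ext (Fin.ext f1) (Fin.ext f2)
  have hval : ∀ jk : Fin (p - 1) × Fin (q - 1), Λb (g jk) = Λs jk := by
    intro jk
    simp only [hΛb, hΛs, hg]
    rw [pathα_scale m p hm hp jk.1 (hι1 jk.1), pathα_scale n q hn hq jk.2 (hι2 jk.2)]
  -- positivity of the small product
  have hspos : (0 : ℝ) < ∏ jk, Λs jk := by
    apply Finset.prod_pos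
    intro jk _
    exact add_pos (pathα_pos p hp jk.1) (pathα_pos q hq jk.2)
  -- split the big product
  set s : Finset (Fin (m * p - 1) × Fin (n * q - 1)) :=
    Finset.univ \ Finset.image g Finset.univ with hs
  have hsplit : (∏ jk, Λb jk) = (∏ jk, Λs jk) * ∏ jk ∈ s, Λb jk := by
    rw [← Finset.prod_sdiff (Finset.subset_univ (Finset.image g Finset.univ))]
    rw [Finset.prod_image (fun a _ b _ hab => hginj hab)]
    rw [Finset.prod_congr rfl (fun jk _ => hval jk)]
    ring
  -- the complementary product is an algebraic integer
  have hrest_int : IsIntegral ℤ (∏ jk ∈ s, Λb jk) := by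
    apply Finset.prod_induction _ (IsIntegral ℤ) (fun a b ha hb => ha.mul hb) isIntegral_one
    intro jk _
    exact (pathα_isIntegral (m * p) hP jk.1).add (pathα_isIntegral (n * q) hQ jk.2)
  -- rationality
  have hd1ne : d1 ≠ 0 := by
    intro h0
    rw [h0] at hd1
    simp only [Int.cast_zero] at hd1
    exact absurd hd1.symm (ne_of_gt hspos)
  set r : ℚ := (d2 : ℚ) / (d1 : ℚ) with hrdef
  have hd1q : ((d1 : ℤ) : ℚ) ≠ 0 := Int.cast_ne_zero.mpr hd1ne
  have hrcast : ((r : ℚ) : ℝ) = ∏ jk ∈ s, Λb jk := by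
    push_cast [hrdef]
    rw [div_eq_iff (by exact_mod_cast Int.cast_ne_zero.mpr hd1ne : ((d1 : ℤ) : ℝ) ≠ 0)]
    rw [hd1, hd2, hsplit]
    ring
  have hr_int : IsIntegral ℤ r := by
    have h1 : IsIntegral ℤ ((Rat.castHom ℝ).toIntAlgHom r) := by
      show IsIntegral ℤ ((r : ℚ) : ℝ)
      rw [hrcast]; exact hrest_int
    exact (isIntegral_algHom_iff (Rat.castHom ℝ).toIntAlgHom (Rat.cast_injective)).mp h1
  obtain ⟨z, hz⟩ := IsIntegrallyClosed.isIntegral_iff.mp hr_int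
  have hzq : ((d2 : ℤ) : ℚ) = ((d1 : ℤ) : ℚ) * (z : ℚ) := by
    have : (z : ℚ) = r := by exact_mod_cast hz
    rw [this, hrdef]
    field_simp
  have hzz : d2 = d1 * z := by exact_mod_cast hzq
  show |d1| ∣ |d2|
  exact (abs_dvd _ _).mpr ((dvd_abs _ _).mpr ⟨z, hzz⟩)

theorem gammaRect_dvd (m n p q : ℕ)
    (hm : 0 < m) (hn : 0 < n) (hp : 0 < p) (hq : 0 < q) :
    gammaRect p q ∣ gammaRect (m * p) (n * q) :=
  gammaRect_dvd' m n p q hm hn hp hq
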